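/- Let f_δ be the Morse perturbations of f = (1/ε)E_ε and u_δ : ℝ → W^{1,2}(S³) the entire solutions of ∂_t u_δ = −Df_δ(u_δ) converging to ±a₀ as t → +∞, uniformly bounded in W^{2α,2}(S³), and let u be the entire solution of the unperturbed flow ∂_t u = −Df(u) obtained as the limit of u_δ on compact time intervals with u(t) → u^{+∞} ∈ A_ε in W^{1,2}(S³) as t → +∞. Then for any η > 0 there exist T̄ > 0 and δ̄ > 0 such that f_δ(u_δ(t)) − f_δ(±a₀) < η for all t ≥ T̄ and all δ ∈ (0,δ̄). -/

import Mathlib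

/-!
STATEMENT 17 (the Claim in the proof of the Main Theorem): continuity of
`f_δ(u_δ(t))` at `(t, δ) = (+∞, 0)`: for every `η > 0` there are `T̄ > 0` and `δ̄ > 0`
with `f_δ(u_δ(t)) − f_δ(±a₀) < η` for all `t ≥ T̄` and `δ ∈ (0, δ̄)`.

`H` is an abstract Hilbert space standing for `W^{1,2}(S³)`.  The entire solutions `u_δ`
of the perturbed negative L²-gradient flows, and the unperturbed limiting solution `u`
with `u(t) → u^{+∞} ∈ A_ε`, are given as data together with the properties stated in the
paper: monotonicity of `f_δ` along `u_δ`, `f_δ(±a₀) = f(±a₀)` (since `g₁(±a₀) = 0`),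
`f` constant on the critical manifold `A_ε`, uniform convergence `u_δ → u` on compact
time intervals, and `sup_H |f_δ − f| ≤ Mδ`.
-/

open Filter Topology Set Metric

noncomputable section

namespace PaperFormalization

variable {H : Type*} [NormedAddCommGroup H] [InnerProductSpace ℝ H] [CompleteSpace H]

/-- For any `η > 0` there exist `T̄ > 0` and `δ̄ ∈ (0, δ₁)` such that
`f_δ(u_δ(t)) − f_δ(a₀) < η` for all `t ≥ T̄` and all `δ ∈ (0, δ̄)`.  (By evenness,
`f_δ(a₀) = f_δ(−a₀)`, so `±a₀` are covered simultaneously.) -/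
theorem energy_continuity_at_infinity
    (f : H → ℝ) (hfc : Continuous f)
    (fδ : ℝ → H → ℝ) (δ₁ : ℝ) (hδ₁ : 0 < δ₁)
    (Aε : Set H) (a₀ : H) (ha₀ : a₀ ∈ Aε)
    -- f_δ(±a₀) = f(±a₀): the perturbation vanishes at a₀ (g₁(±a₀) = 0)
    (hfδa₀ : ∀ δ, 0 < δ → δ < δ₁ → fδ δ a₀ = f a₀)
    (hfδeven : ∀ δ, 0 < δ → δ < δ₁ → ∀ u, fδ δ (-u) = fδ δ u)
    -- f is constant on the critical manifold A_ε
    (hfA : ∀ v ∈ Aε, f v = f a₀)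
    -- uniform bound |f_δ − f| ≤ M δ  (f_δ = f + δχG with χG bounded)
    (M : ℝ) (hM : ∀ δ, 0 < δ → δ < δ₁ → ∀ u, |fδ δ u - f u| ≤ M * δ)
    -- the perturbed flows u_δ and the limiting flow u
    (uδ : ℝ → ℝ → H) (u : ℝ → H)
    -- the energy f_δ is (weakly) decreasing along u_δ
    (hmono : ∀ δ, 0 < δ → δ < δ₁ → ∀ s t : ℝ, s ≤ t → fδ δ (uδ δ t) ≤ fδ δ (uδ δ s))
    -- u_δ(t) → ±a₀ in W^{1,2} as t → +∞ (so f_δ(u_δ(t)) ≥ f_δ(a₀) for all t)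
    (hlim : ∀ δ, 0 < δ → δ < δ₁ →
      Tendsto (fun t => min ‖uδ δ t - a₀‖ ‖uδ δ t + a₀‖) atTop (𝓝 0))
    -- u_δ → u uniformly on compact time intervals, as δ ↓ 0
    (hcompconv : ∀ T > (0:ℝ), ∀ η > (0:ℝ), ∃ δ' > (0:ℝ), ∀ δ, 0 < δ → δ < δ' →
      ∀ t ∈ Set.Icc (-T) T, ‖uδ δ t - u t‖ ≤ η)
    -- u(t) → u^{+∞} ∈ A_ε in W^{1,2} as t → +∞
    (uInf : H) (huInf : uInf ∈ Aε)
    (hu : Tendsto (fun t => ‖u t - uInf‖) atTop (𝓝 0)) :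
    ∀ η > (0:ℝ), ∃ (Tb : ℝ) (δb : ℝ), 0 < Tb ∧ 0 < δb ∧ δb ≤ δ₁ ∧
      ∀ t ≥ Tb, ∀ δ, 0 < δ → δ < δb → fδ δ (uδ δ t) - fδ δ a₀ < η := by
  intro η hη
  -- continuity of f at uInf
  obtain ⟨s, hs, hsball⟩ : ∃ s > 0, ∀ v : H, ‖v - uInf‖ < s → |f v - f uInf| < η / 4 := by
    have := Metric.continuous_iff.mp hfc uInf (η / 4) (by linarith)
    obtain ⟨s, hs, h⟩ := this
    exact ⟨s, hs, fun v hv => by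
      have := h v (by simpa [dist_eq_norm] using hv)
      simpa [Real.dist_eq, abs_sub_comm] using this⟩
  -- choose T0 with ‖u t - uInf‖ < s for t ≥ T0
  obtain ⟨T0, hT0⟩ := (Metric.tendsto_atTop.mp hu s hs)
  set T : ℝ := max T0 1 with hT
  have hTpos : (0:ℝ) < T := lt_of_lt_of_le one_pos (le_max_right _ _)
  have huT : ‖u T - uInf‖ < s := by
    have := hT0 T (le_max_left _ _)
    simpa [Real.dist_eq, abs_sub_comm] using (abs_lt.mp (by simpa [Real.dist_eq] using this)).2
  have hfuT : |f (u T) - f uInf| < η / 4 := hsball _ huT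
  -- continuity of f at u T
  obtain ⟨r, hr, hrball⟩ : ∃ r > 0, ∀ v : H, ‖v - u T‖ ≤ r → |f v - f (u T)| < η / 4 := by
    have := Metric.continuous_iff.mp hfc (u T) (η / 4) (by linarith)
    obtain ⟨r, hrpos, h⟩ := this
    refine ⟨r / 2, by linarith, fun v hv => ?_⟩
    have : dist v (u T) < r := by
      rw [dist_eq_norm]; linarith
    have := h v this
    simpa [Real.dist_eq, abs_sub_comm] using this
  -- choose δ' from compact convergence
  obtain ⟨δ', hδ', hconv⟩ := hcompconv T hTpos r hr
  -- choose δb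
  set δb : ℝ := min δ₁ (min δ' (η / (4 * (|M| + 1)))) with hδb
  have hMpos : (0:ℝ) < |M| + 1 := by positivity
  have hδbpos : 0 < δb := by
    apply lt_min hδ₁
    apply lt_min hδ'
    positivity
  refine ⟨T, δb, hTpos, hδbpos, min_le_left _ _, ?_⟩
  intro t ht δ hδpos hδlt
  have hδδ₁ : δ < δ₁ := lt_of_lt_of_le hδlt (min_le_left _ _)
  have hδδ' : δ < δ' := lt_of_lt_of_le hδlt ((min_le_right _ _).trans (min_le_left _ _))
  have hδη : δ < η / (4 * (|M| + 1)) :=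
    lt_of_lt_of_le hδlt ((min_le_right _ _).trans (min_le_right _ _))
  -- bound M * δ < η/4
  have hMδ : M * δ < η / 4 := by
    calc M * δ ≤ |M| * δ := mul_le_mul_of_nonneg_right (le_abs_self M) hδpos.le
      _ < (|M| + 1) * (η / (4 * (|M| + 1))) := by
          apply mul_lt_mul' (by linarith) hδη hδpos.le hMpos
      _ = η / 4 := by field_simp
  -- uδ δ T is close to u T
  have hclose : ‖uδ δ T - u T‖ ≤ r :=
    hconv δ hδpos hδδ' T ⟨by linarith, le_refl T⟩
  have h1 : |f (uδ δ T) - f (u T)| < η / 4 := hrball _ hclose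
  have h2 : |fδ δ (uδ δ T) - f (uδ δ T)| ≤ M * δ := hM δ hδpos hδδ₁ _
  have h3 : fδ δ a₀ = f a₀ := hfδa₀ δ hδpos hδδ₁
  have h4 : f uInf = f a₀ := hfA uInf huInf
  have hmonoT : fδ δ (uδ δ t) ≤ fδ δ (uδ δ T) := hmono δ hδpos hδδ₁ T t ht
  have e1 := (abs_lt.mp hfuT).2
  have e2 := (abs_lt.mp h1).2
  have e3 := (abs_le.mp h2).2
  calc fδ δ (uδ δ t) - fδ δ a₀ ≤ fδ δ (uδ δ T) - f a₀ := by rw [h3]; linarith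
    _ < η := by linarith

end PaperFormalization
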